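/- (Recursive feasibility of the multi-horizon MPC for tracking.) Let A, B, K be real matrices of sizes n×n, n×m, m×n, X ⊆ ℝ^n, U ⊆ ℝ^m, and fix a horizon division H = [h₁, h₂, …, h_H] with h₁ ≥ 1 and total length N = ∑ h_i. Define the coarse dynamics A_i = A^i, B_i = ∑_{j<i} A^j B, the tail-feasible set X₀⁽²⁾ = { x ∈ X : there exist inputs in U driving the coarse tail dynamics (sub-intervals i = 2,…,H) with all states in X }, W_MH = { (x, x̄, ū) : x ∈ X₀⁽²⁾, K(x̄ − x) + ū ∈ U }, A_e = [[A−BK, BK, B], [0, I_n, 0], [0, 0, I_m]], and O_∞^MH = { w : A_e^k w ∈ W_MH for all k ≥ 0 }. Call a state x feasible if there exist sequences x_(0),…,x_(N) and u_(0),…,u_(N−1) and a pair (x̄, ū) such that: x_(k+1) = A_i x_(k) + B_i u_(k) on each sub-interval i; x_(k) ∈ X and u_(k) ∈ U for all 0 ≤ k ≤ N−1; x_(0) = x; (x_(h₁), x̄, ū) ∈ O_∞^MH; and (A − I_n) x̄ + B ū = 0. Then feasibility is recursively preserved: if x is feasible with a feasible point whose first input is u_(0), the successor state A x + B u_(0)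 is again feasible; hence if the problem is feasible at time t₀ it remains feasible at all times t ≥ t₀ along the closed loop. -/

import Mathlib

open Matrix

/-- Coarse multi-horizon input matrix `B_i = ∑_{j=0}^{i-1} A^j B`. -/
noncomputable def Bcoarse {n m : ℕ} (A : Matrix (Fin n) (Fin n) ℝ)
    (B : Matrix (Fin n) (Fin m) ℝ) (i : ℕ) : Matrix (Fin n) (Fin m) ℝ :=
  ∑ j ∈ Finset.range i, A ^ j * B

/-- Feasibility of the coarse tail problem along a list of granularities `steps`: from the state
`x` there exist inputs in `U` such that all successor states generated by the coarse dynamics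
`x ↦ A^i x + B_i u` lie in `X`. -/
def tailFeasible {n m : ℕ} (A : Matrix (Fin n) (Fin n) ℝ) (B : Matrix (Fin n) (Fin m) ℝ)
    (X : Set (Fin n → ℝ)) (U : Set (Fin m → ℝ)) : List ℕ → (Fin n → ℝ) → Prop
  | [], _ => True
  | i :: rest, x => ∃ u ∈ U,
      (A ^ i).mulVec x + (Bcoarse A B i).mulVec u ∈ X ∧
      tailFeasible A B X U rest ((A ^ i).mulVec x + (Bcoarse A B i).mulVec u)

/-- The flattened list of granularities of the tail sub-intervals: given the horizon tail
`hs = [h₂, …, h_H]`, the `j`-th entry of `hs` (granularity `j + 2`) contributes `h_{j+2}` steps. -/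
def tailSteps (hs : List ℕ) : List ℕ :=
  hs.zipIdx.flatMap fun p => List.replicate p.1 (p.2 + 2)

/-- The set `X₀⁽²⁾` of states in `X` from which the coarse tail problem (sub-intervals
`i = 2, …, H`) admits a feasible input sequence. -/
def X02 {n m : ℕ} (A : Matrix (Fin n) (Fin n) ℝ) (B : Matrix (Fin n) (Fin m) ℝ)
    (X : Set (Fin n → ℝ)) (U : Set (Fin m → ℝ)) (hs : List ℕ) : Set (Fin n → ℝ) :=
  {x | x ∈ X ∧ tailFeasible A B X U (tailSteps hs) x}

/-- The extended block matrix `A_e = [[A - BK, BK, B], [0, I_n, 0], [0, 0, I_m]]`. -/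
noncomputable def Ae {n m : ℕ} (A : Matrix (Fin n) (Fin n) ℝ) (B : Matrix (Fin n) (Fin m) ℝ)
    (K : Matrix (Fin m) (Fin n) ℝ) :
    Matrix ((Fin n ⊕ Fin n) ⊕ Fin m) ((Fin n ⊕ Fin n) ⊕ Fin m) ℝ :=
  Matrix.fromBlocks
    (Matrix.fromBlocks (A - B * K) (B * K) 0 1)
    (Matrix.fromRows B 0)
    0 1

/-- The extended state vector `w = (x, x̄, ū) ∈ ℝ^{2n+m}`. -/
def toVec {n m : ℕ} (x xb : Fin n → ℝ) (ub : Fin m → ℝ) : ((Fin n ⊕ Fin n) ⊕ Fin m) → ℝ :=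
  Sum.elim (Sum.elim x xb) ub

/-- Projection onto the state component `x` of the extended state. -/
def projX {n m : ℕ} (w : ((Fin n ⊕ Fin n) ⊕ Fin m) → ℝ) : Fin n → ℝ :=
  fun i => w (Sum.inl (Sum.inl i))

/-- Projection onto the steady-state component `x̄` of the extended state. -/
def projXbar {n m : ℕ} (w : ((Fin n ⊕ Fin n) ⊕ Fin m) → ℝ) : Fin n → ℝ :=
  fun i => w (Sum.inl (Sum.inr i))

/-- Projection onto the steady-input component `ū` of the extended state. -/
def projUbar {n m : ℕ} (w : ((Fin n ⊕ Fin n) ⊕ Fin m) → ℝ) : Fin m → ℝ :=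
  fun i => w (Sum.inr i)

/-- The multi-horizon constraint set
`W_MH = { (x, x̄, ū) : x ∈ X₀⁽²⁾, K (x̄ - x) + ū ∈ U }`. -/
def WMH {n m : ℕ} (A : Matrix (Fin n) (Fin n) ℝ) (B : Matrix (Fin n) (Fin m) ℝ)
    (K : Matrix (Fin m) (Fin n) ℝ) (X : Set (Fin n → ℝ)) (U : Set (Fin m → ℝ))
    (hs : List ℕ) : Set (((Fin n ⊕ Fin n) ⊕ Fin m) → ℝ) :=
  {w | projX w ∈ X02 A B X U hs ∧ K.mulVec (projXbar w - projX w) + projUbar w ∈ U}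

/-- The multi-horizon maximal output admissible set
`O_∞^MH = { w : A_e^k w ∈ W_MH for all k ≥ 0 }`. -/
def OinfMH {n m : ℕ} (A : Matrix (Fin n) (Fin n) ℝ) (B : Matrix (Fin n) (Fin m) ℝ)
    (K : Matrix (Fin m) (Fin n) ℝ) (X : Set (Fin n → ℝ)) (U : Set (Fin m → ℝ))
    (hs : List ℕ) : Set (((Fin n ⊕ Fin n) ⊕ Fin m) → ℝ) :=
  {w | ∀ k : ℕ, ((Ae A B K) ^ k).mulVec w ∈ WMH A B K X U hs}

/-- The flattened list of granularities of the whole horizon division `H = [h₁, h₂, …, h_H]`: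
`h₁` steps of granularity `1` followed by the coarse tail steps. Its length is the total
horizon length `N = ∑ h_i`. -/
def fullSteps (h1 : ℕ) (hs : List ℕ) : List ℕ :=
  List.replicate h1 1 ++ tailSteps hs

/-- `FeasibleWit A B K X U h1 hs x xs us xb ub` states that the sequences `xs`, `us` and the
steady pair `(xb, ub)` witness feasibility of the multi-horizon tracking MPC problem at state `x`:
the piecewise coarse dynamics `x_(k+1) = A_i x_(k) + B_i u_(k)` hold on each sub-interval,
`x_(k) ∈ X` and `u_(k) ∈ U` for `0 ≤ k ≤ N - 1`, `x_(0) = x`, the invariance constraint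
`(x_(h₁), x̄, ū) ∈ O_∞^MH` holds, and `(A - I) x̄ + B ū = 0`. -/
def FeasibleWit {n m : ℕ} (A : Matrix (Fin n) (Fin n) ℝ) (B : Matrix (Fin n) (Fin m) ℝ)
    (K : Matrix (Fin m) (Fin n) ℝ) (X : Set (Fin n → ℝ)) (U : Set (Fin m → ℝ))
    (h1 : ℕ) (hs : List ℕ) (x : Fin n → ℝ)
    (xs : ℕ → Fin n → ℝ) (us : ℕ → Fin m → ℝ) (xb : Fin n → ℝ) (ub : Fin m → ℝ) : Prop :=
  xs 0 = x ∧
  (∀ k < (fullSteps h1 hs).length,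
    xs (k + 1) = (A ^ ((fullSteps h1 hs).getD k 1)).mulVec (xs k) +
      (Bcoarse A B ((fullSteps h1 hs).getD k 1)).mulVec (us k)) ∧
  (∀ k < (fullSteps h1 hs).length, xs k ∈ X ∧ us k ∈ U) ∧
  toVec (xs h1) xb ub ∈ OinfMH A B K X U hs ∧
  (A - 1).mulVec xb + B.mulVec ub = 0

/-- Feasibility of the multi-horizon tracking MPC problem at the state `x`: nonemptiness of the
constraint set. -/
def Feasible {n m : ℕ} (A : Matrix (Fin n) (Fin n) ℝ) (B : Matrix (Fin n) (Fin m) ℝ)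
    (K : Matrix (Fin m) (Fin n) ℝ) (X : Set (Fin n → ℝ)) (U : Set (Fin m → ℝ))
    (h1 : ℕ) (hs : List ℕ) (x : Fin n → ℝ) : Prop :=
  ∃ xs us xb ub, FeasibleWit A B K X U h1 hs x xs us xb ub


section Aux

variable {n m : ℕ}

lemma Ae_mulVec (A : Matrix (Fin n) (Fin n) ℝ) (B : Matrix (Fin n) (Fin m) ℝ)
    (K : Matrix (Fin m) (Fin n) ℝ) (x xb : Fin n → ℝ) (ub : Fin m → ℝ) :
    (Ae A B K).mulVec (toVec x xb ub) =
      toVec (A.mulVec x + B.mulVec (K.mulVec (xb - x) + ub)) xb ub := by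
  unfold Ae toVec
  rw [Matrix.fromBlocks_mulVec]
  simp only [Sum.elim_comp_inl, Sum.elim_comp_inr]
  rw [Matrix.fromBlocks_mulVec]
  have h1 : (Matrix.fromRows B (0 : Matrix (Fin n) (Fin m) ℝ)).mulVec ub
      = Sum.elim (B.mulVec ub) 0 := by
    funext i; cases i <;> simp [Matrix.fromRows_mulVec]
  rw [h1]
  funext i
  cases i with
  | inl j =>
    cases j <;>
      simp [Matrix.sub_mulVec, Matrix.mulVec_add, mulVec_mulVec, Matrix.mulVec_sub]
    ring
  | inr j => simp

lemma tail_extract (A : Matrix (Fin n) (Fin n) ℝ) (B : Matrix (Fin n) (Fin m) ℝ)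
    (X : Set (Fin n → ℝ)) (U : Set (Fin m → ℝ)) :
    ∀ (steps : List ℕ) (x : Fin n → ℝ), tailFeasible A B X U steps x →
    ∃ (ys : ℕ → Fin n → ℝ) (vs : ℕ → Fin m → ℝ), ys 0 = x ∧
      (∀ k < steps.length,
        ys (k + 1) = (A ^ (steps.getD k 1)).mulVec (ys k) +
          (Bcoarse A B (steps.getD k 1)).mulVec (vs k)) ∧
      (∀ k < steps.length, ys (k + 1) ∈ X ∧ vs k ∈ U) := by
  intro steps
  induction steps with
  | nil =>
    intro x _
    exact ⟨fun _ => x, fun _ => 0, rfl, by simp, by simp⟩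
  | cons i rest ih =>
    intro x hx
    obtain ⟨u, hu, hX, htail⟩ := hx
    obtain ⟨ys, vs, hy0, hdyn, hcon⟩ := ih _ htail
    refine ⟨fun k => Nat.rec x (fun k _ => ys k) k,
      fun k => Nat.rec u (fun k _ => vs k) k, rfl, ?_, ?_⟩
    · intro k hk
      cases k with
      | zero => simp [hy0]
      | succ k =>
        simp only [List.length_cons] at hk
        have := hdyn k (by omega)
        simpa using this
    · intro k hk
      cases k with
      | zero => simpa [hy0] using ⟨hX, hu⟩
      | succ k =>
        simp only [List.length_cons] at hk
        have := hcon k (by omega)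
        simpa using this

lemma Bcoarse_one (A : Matrix (Fin n) (Fin n) ℝ) (B : Matrix (Fin n) (Fin m) ℝ) :
    Bcoarse A B 1 = B := by simp [Bcoarse]

lemma fullSteps_length (h1 : ℕ) (hs : List ℕ) :
    (fullSteps h1 hs).length = h1 + (tailSteps hs).length := by
  simp [fullSteps]

lemma fullSteps_getD_lt (h1 : ℕ) (hs : List ℕ) (k : ℕ) (hk : k < h1) :
    (fullSteps h1 hs).getD k 1 = 1 := by
  unfold fullSteps
  rw [List.getD_append _ _ _ _ (by simpa using hk)]
  simp [List.getD_eq_getElem?_getD, List.getElem?_replicate, hk]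

lemma fullSteps_getD_ge (h1 : ℕ) (hs : List ℕ) (j : ℕ) :
    (fullSteps h1 hs).getD (h1 + j) 1 = (tailSteps hs).getD j 1 := by
  unfold fullSteps
  rw [List.getD_append_right _ _ _ _ (by simp)]
  simp

lemma main_step (A : Matrix (Fin n) (Fin n) ℝ) (B : Matrix (Fin n) (Fin m) ℝ)
    (K : Matrix (Fin m) (Fin n) ℝ) (X : Set (Fin n → ℝ)) (U : Set (Fin m → ℝ))
    (h1 : ℕ) (hs : List ℕ) (hh1 : 1 ≤ h1)
    (x : Fin n → ℝ) (xs : ℕ → Fin n → ℝ) (us : ℕ → Fin m → ℝ)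
    (xb : Fin n → ℝ) (ub : Fin m → ℝ)
    (hFW : FeasibleWit A B K X U h1 hs x xs us xb ub) :
    Feasible A B K X U h1 hs (A.mulVec x + B.mulVec (us 0)) := by
  obtain ⟨p, rfl⟩ : ∃ p, h1 = p + 1 := ⟨h1 - 1, by omega⟩
  obtain ⟨hx0, hdyn, hcon, hO, hss⟩ := hFW
  have hlen : (fullSteps (p + 1) hs).length = (p + 1) + (tailSteps hs).length :=
    fullSteps_length _ _
  -- the terminal controller input and the new terminal-entry state
  set unew : Fin m → ℝ := K.mulVec (xb - xs (p + 1)) + ub with hunew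
  set xnew : Fin n → ℝ := A.mulVec (xs (p + 1)) + B.mulVec unew with hxnew
  have hAeStep : (Ae A B K).mulVec (toVec (xs (p + 1)) xb ub) = toVec xnew xb ub :=
    Ae_mulVec A B K _ _ _
  have hW0 : toVec (xs (p + 1)) xb ub ∈ WMH A B K X U hs := by
    have := hO 0; simpa using this
  have hW1 : toVec xnew xb ub ∈ WMH A B K X U hs := by
    have := hO 1
    rwa [pow_one, hAeStep] at this
  have hOnew : toVec xnew xb ub ∈ OinfMH A B K X U hs := by
    intro k
    have := hO (k + 1)
    rwa [pow_succ, ← mulVec_mulVec, hAeStep] at this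
  have hXcur : xs (p + 1) ∈ X := hW0.1.1
  have hUnew : unew ∈ U := by
    have := hW0.2
    exact this
  have hXnewX02 : xnew ∈ X02 A B X U hs := hW1.1
  obtain ⟨ys, vs, hy0, hydyn, hycon⟩ :=
    tail_extract A B X U (tailSteps hs) xnew hXnewX02.2
  -- the shifted candidate sequences
  refine ⟨fun k => if k < p + 1 then xs (k + 1) else ys (k - (p + 1)),
    fun k => if k < p then us (k + 1) else if k = p then unew else vs (k - (p + 1)),
    xb, ub, ?_, ?_, ?_, ?_, hss⟩
  · -- initial condition
    have h0 : xs 1 = (A ^ ((fullSteps (p + 1) hs).getD 0 1)).mulVec (xs 0) +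
        (Bcoarse A B ((fullSteps (p + 1) hs).getD 0 1)).mulVec (us 0) :=
      hdyn 0 (by omega)
    rw [fullSteps_getD_lt _ _ _ (by omega)] at h0
    simp only [pow_one, Bcoarse_one] at h0
    simp [h0, hx0]
  · -- dynamics
    intro k hk
    rw [hlen] at hk
    rcases lt_trichotomy k p with hkp | hkp | hkp
    · have hlt : k + 1 < p + 1 := by omega
      simp only [if_pos (by omega : k < p + 1), if_pos hlt, if_pos hkp]
      have := hdyn (k + 1) (by omega)
      rw [fullSteps_getD_lt _ _ (k + 1) (by omega)] at this
      rw [fullSteps_getD_lt _ _ k (by omega)]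
      exact this
    · subst hkp
      simp only [if_pos (by omega : k < k + 1), if_neg (by omega : ¬ k + 1 < k + 1),
        if_neg (lt_irrefl k), if_pos rfl, Nat.sub_self]
      rw [fullSteps_getD_lt _ _ _ (by omega)]
      simp only [pow_one, Bcoarse_one]
      simp [hy0, hxnew]
    · obtain ⟨j, rfl⟩ : ∃ j, k = (p + 1) + j := ⟨k - (p + 1), by omega⟩
      have hj : j < (tailSteps hs).length := by omega
      simp only [if_neg (by omega : ¬ (p + 1) + j < p + 1),
        if_neg (by omega : ¬ (p + 1) + j + 1 < p + 1),
        if_neg (by omega : ¬ (p + 1) + j < p), if_neg (by omega : (p + 1) + j ≠ p)]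
      have harith1 : (p + 1) + j + 1 - (p + 1) = j + 1 := by omega
      have harith2 : (p + 1) + j - (p + 1) = j := by omega
      rw [harith1, harith2, fullSteps_getD_ge]
      exact hydyn j hj
  · -- constraints
    intro k hk
    rw [hlen] at hk
    rcases lt_trichotomy k p with hkp | hkp | hkp
    · simp only [if_pos (by omega : k < p + 1), if_pos hkp]
      exact hcon (k + 1) (by omega)
    · subst hkp
      simp only [if_pos (by omega : k < k + 1), if_neg (lt_irrefl k), if_pos rfl]
      exact ⟨hXcur, hUnew⟩
    · obtain ⟨j, rfl⟩ : ∃ j, k = (p + 1) + j := ⟨k - (p + 1), by omega⟩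
      have hj : j < (tailSteps hs).length := by omega
      simp only [if_neg (by omega : ¬ (p + 1) + j < p + 1),
        if_neg (by omega : ¬ (p + 1) + j < p), if_neg (by omega : (p + 1) + j ≠ p)]
      have harith2 : (p + 1) + j - (p + 1) = j := by omega
      rw [harith2]
      constructor
      · cases j with
        | zero => rw [hy0]; exact hXnewX02.1
        | succ j' => exact (hycon j' (by omega)).1
      · exact (hycon j hj).2
  · -- invariance
    simp only [if_neg (lt_irrefl (p + 1)), Nat.sub_self]
    rw [hy0]
    exact hOnew

end Aux

/-- recursive feasibility of the multi-horizon MPC for tracking. If `x` is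
feasible with a feasible point whose first input is `u_(0) = us 0`, then the successor state
`A x + B u_(0)` is again feasible; hence, along any closed loop in which the applied input is
always the first input of a feasible point, feasibility at time `t₀ = 0` implies feasibility at
all later times. -/
theorem recursive_feasibility
    {n m : ℕ} (A : Matrix (Fin n) (Fin n) ℝ) (B : Matrix (Fin n) (Fin m) ℝ)
    (K : Matrix (Fin m) (Fin n) ℝ) (X : Set (Fin n → ℝ)) (U : Set (Fin m → ℝ))
    (h1 : ℕ) (hs : List ℕ) (hh1 : 1 ≤ h1) :
    (∀ (x : Fin n → ℝ) (xs : ℕ → Fin n → ℝ) (us : ℕ → Fin m → ℝ)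
        (xb : Fin n → ℝ) (ub : Fin m → ℝ),
      FeasibleWit A B K X U h1 hs x xs us xb ub →
      Feasible A B K X U h1 hs (A.mulVec x + B.mulVec (us 0))) ∧
    (∀ (xt : ℕ → Fin n → ℝ) (ut : ℕ → Fin m → ℝ),
      (∀ t, xt (t + 1) = A.mulVec (xt t) + B.mulVec (ut t)) →
      (∀ t, Feasible A B K X U h1 hs (xt t) →
        ∃ xs us xb ub, FeasibleWit A B K X U h1 hs (xt t) xs us xb ub ∧ ut t = us 0) →
      Feasible A B K X U h1 hs (xt 0) →
      ∀ t, Feasible A B K X U h1 hs (xt t)) := by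
  constructor
  · intro x xs us xb ub hFW
    exact main_step A B K X U h1 hs hh1 x xs us xb ub hFW
  · intro xt ut hdynCL hsel h0 t
    induction t with
    | zero => exact h0
    | succ t ih =>
      obtain ⟨xs, us, xb, ub, hFW, hu⟩ := hsel t ih
      rw [hdynCL t, hu]
      exact main_step A B K X U h1 hs hh1 (xt t) xs us xb ub hFW
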